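/- Let d > 0, β ≥ 0, γ > 0, d_I ≥ 0 with R₀ := β/(γ + d + d_I) < 1. Let b : [0,∞) → [0, b₊] be C¹ with b(0) = 0, and suppose there exists N* > 0 such that b(N) > dN for N ∈ (0, N*), b(N) < dN for N > N*, and b'(N*) < d. Then for every ε > 0 there exists δ > 0 with the following property: whenever S, I, R : [0,∞) → ℝ are differentiable nonnegative functions with N(t) := S(t) + I(t) + R(t) > 0, satisfying for all t ≥ 0 the equations I'(t) = β S(t) I(t)/N(t) − (γ + d + d_I) I(t), R'(t) ≤ γ I(t) − d R(t), N'(t) = b(N(t)) − d N(t) − d_I I(t), and whose initial data satisfy |S(0) − N*| < δ, I(0) < δ and R(0) < δ, one has |S(t) − N*| < ε, I(t) < ε and R(t) < ε for all t ≥ 0. -/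

import Mathlib

open Set Filter Real



/-- If `g 0 ≤ M` and `g' ≤ 0` whenever `g > M`, then `g` stays `≤ M`. -/
lemma stays_below (g g' : ℝ → ℝ) (t₁ : ℝ) (ht₁ : 0 ≤ t₁) (M : ℝ)
    (hg : ∀ t ∈ Icc (0:ℝ) t₁, HasDerivAt g (g' t) t)
    (h0 : g 0 ≤ M)
    (hder : ∀ t ∈ Icc (0:ℝ) t₁, M < g t → g' t ≤ 0) :
    g t₁ ≤ M := by
  by_contra h
  push_neg at h
  set v := (M + g t₁) / 2 with hv
  have hMv : M < v := by simp [hv]; linarith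
  have hvlt : v < g t₁ := by simp [hv]; linarith
  have hcont : ContinuousOn g (Icc 0 t₁) := fun t ht =>
    (hg t ht).continuousAt.continuousWithinAt
  set A := Icc (0:ℝ) t₁ ∩ g ⁻¹' Iic v with hA
  have hA0 : (0:ℝ) ∈ A := ⟨⟨le_refl _, ht₁⟩, by simp; linarith⟩
  have hAclosed : IsClosed A :=
    hcont.preimage_isClosed_of_isClosed isClosed_Icc isClosed_Iic
  have hAbdd : BddAbove A := ⟨t₁, fun t ht => ht.1.2⟩
  set t₀ := sSup A with ht₀
  have ht₀A : t₀ ∈ A := hAclosed.csSup_mem ⟨0, hA0⟩ hAbdd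
  have ht₀v : g t₀ ≤ v := ht₀A.2
  have ht₀mem : t₀ ∈ Icc (0:ℝ) t₁ := ht₀A.1
  have ht₀lt : t₀ < t₁ := lt_of_le_of_ne ht₀mem.2 (by
    intro he; rw [he] at ht₀v; linarith)
  have hkey : ∀ t ∈ Ioc t₀ t₁, v < g t := by
    intro t ht
    by_contra hle
    push_neg at hle
    have : t ∈ A := ⟨⟨le_trans ht₀mem.1 ht.1.le, ht.2⟩, hle⟩
    exact absurd (le_csSup hAbdd this) (not_le.2 ht.1)
  have hanti : AntitoneOn g (Icc t₀ t₁) := by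
    apply antitoneOn_of_deriv_nonpos (convex_Icc _ _)
      (hcont.mono (Icc_subset_Icc ht₀mem.1 le_rfl))
    · intro x hx
      rw [interior_Icc] at hx
      exact ((hg x ⟨le_trans ht₀mem.1 hx.1.le, hx.2.le⟩).differentiableAt).differentiableWithinAt
    · intro x hx
      rw [interior_Icc] at hx
      have hxm : x ∈ Icc (0:ℝ) t₁ := ⟨le_trans ht₀mem.1 hx.1.le, hx.2.le⟩
      rw [(hg x hxm).deriv]
      exact hder x hxm (lt_trans hMv (hkey x ⟨hx.1, hx.2.le⟩))
  have := hanti ⟨le_rfl, ht₀lt.le⟩ ⟨ht₀lt.le, le_rfl⟩ ht₀lt.le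
  linarith

/-- If `g 0 ≥ c` and `g' ≥ 0` whenever `a < g < c`, then `g` stays `≥ a`. -/
lemma stays_above (g g' : ℝ → ℝ) (t₁ : ℝ) (ht₁ : 0 ≤ t₁) (a c : ℝ) (hac : a < c)
    (hg : ∀ t ∈ Icc (0:ℝ) t₁, HasDerivAt g (g' t) t)
    (h0 : c ≤ g 0)
    (hder : ∀ t ∈ Icc (0:ℝ) t₁, a < g t → g t < c → 0 ≤ g' t) :
    a ≤ g t₁ := by
  by_contra h
  push_neg at h
  have hcont : ContinuousOn g (Icc 0 t₁) := fun t ht =>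
    (hg t ht).continuousAt.continuousWithinAt
  set A := Icc (0:ℝ) t₁ ∩ g ⁻¹' Ici c with hA
  have hA0 : (0:ℝ) ∈ A := ⟨⟨le_refl _, ht₁⟩, h0⟩
  have hAclosed : IsClosed A :=
    hcont.preimage_isClosed_of_isClosed isClosed_Icc isClosed_Ici
  have hAbdd : BddAbove A := ⟨t₁, fun t ht => ht.1.2⟩
  set t₀ := sSup A with ht₀
  have ht₀A : t₀ ∈ A := hAclosed.csSup_mem ⟨0, hA0⟩ hAbdd
  have ht₀c : c ≤ g t₀ := ht₀A.2
  have ht₀mem : t₀ ∈ Icc (0:ℝ) t₁ := ht₀A.1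
  have ht₀lt : t₀ < t₁ := lt_of_le_of_ne ht₀mem.2 (by
    intro he; rw [he] at ht₀c; linarith)
  have hlt_c : ∀ t ∈ Ioc t₀ t₁, g t < c := by
    intro t ht
    by_contra hle
    push_neg at hle
    have : t ∈ A := ⟨⟨le_trans ht₀mem.1 ht.1.le, ht.2⟩, hle⟩
    exact absurd (le_csSup hAbdd this) (not_le.2 ht.1)
  set B := Icc t₀ t₁ ∩ g ⁻¹' Iic a with hB
  have hBt₁ : t₁ ∈ B := ⟨⟨ht₀lt.le, le_rfl⟩, h.le⟩
  have hBclosed : IsClosed B :=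
    (hcont.mono (Icc_subset_Icc ht₀mem.1 le_rfl)).preimage_isClosed_of_isClosed
      isClosed_Icc isClosed_Iic
  have hBbdd : BddBelow B := ⟨t₀, fun t ht => ht.1.1⟩
  set t₂ := sInf B with ht₂
  have ht₂B : t₂ ∈ B := hBclosed.csInf_mem ⟨t₁, hBt₁⟩ hBbdd
  have ht₂a : g t₂ ≤ a := ht₂B.2
  have ht₂mem : t₂ ∈ Icc t₀ t₁ := ht₂B.1
  have ht₂gt : t₀ < t₂ := lt_of_le_of_ne ht₂mem.1 (by
    intro he; rw [← he] at ht₂a; linarith)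
  have hgt_a : ∀ t ∈ Ico t₀ t₂, a < g t := by
    intro t ht
    by_contra hle
    push_neg at hle
    have : t ∈ B := ⟨⟨ht.1, le_trans ht.2.le ht₂mem.2⟩, hle⟩
    exact absurd (csInf_le hBbdd this) (not_le.2 ht.2)
  have hmono : MonotoneOn g (Icc t₀ t₂) := by
    apply monotoneOn_of_deriv_nonneg (convex_Icc _ _)
      (hcont.mono (Icc_subset_Icc ht₀mem.1 ht₂mem.2))
    · intro x hx
      rw [interior_Icc] at hx
      exact ((hg x ⟨le_trans ht₀mem.1 hx.1.le,
        le_trans hx.2.le ht₂mem.2⟩).differentiableAt).differentiableWithinAt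
    · intro x hx
      rw [interior_Icc] at hx
      have hxm : x ∈ Icc (0:ℝ) t₁ := ⟨le_trans ht₀mem.1 hx.1.le, le_trans hx.2.le ht₂mem.2⟩
      rw [(hg x hxm).deriv]
      exact hder x hxm (hgt_a x ⟨hx.1.le, hx.2⟩)
        (hlt_c x ⟨hx.1, le_trans hx.2.le ht₂mem.2⟩)
  have := hmono ⟨le_rfl, ht₂gt.le⟩ ⟨ht₂gt.le, le_rfl⟩ ht₂gt.le
  linarith

set_option maxHeartbeats 1000000 in
/-- Local stability of the disease-free equilibrium `(N*, 0, 0)` when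
`R₀ = β/(γ+d+d_I) < 1`: for every `ε > 0` there is `δ > 0` such that every
nonnegative solution with initial data `δ`-close to the DFE stays `ε`-close to it
for all times. -/
theorem stmt11 (d β γ dI bplus : ℝ) (hd : 0 < d) (hβ : 0 ≤ β) (hγ : 0 < γ)
    (hdI : 0 ≤ dI) (hR0 : β / (γ + d + dI) < 1)
    (b : ℝ → ℝ) (hbC : ContDiffOn ℝ 1 b (Ici 0)) (hbplus : 0 < bplus)
    (hbrange : ∀ N : ℝ, 0 ≤ N → b N ∈ Icc 0 bplus) (hb0 : b 0 = 0)
    (Nstar : ℝ) (hNstar : 0 < Nstar)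
    (hlow : ∀ N : ℝ, 0 < N → N < Nstar → d * N < b N)
    (hhigh : ∀ N : ℝ, Nstar < N → b N < d * N)
    (bN' : ℝ) (hbN'deriv : HasDerivWithinAt b bN' (Ici 0) Nstar) (hbN' : bN' < d) :
    ∀ ε : ℝ, 0 < ε → ∃ δ : ℝ, 0 < δ ∧
      ∀ S I R : ℝ → ℝ, ∀ R' : ℝ → ℝ,
        (∀ t, 0 ≤ t → DifferentiableAt ℝ S t) →
        (∀ t, 0 ≤ t → 0 ≤ S t) →
        (∀ t, 0 ≤ t → 0 ≤ I t) →
        (∀ t, 0 ≤ t → 0 ≤ R t) →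
        (∀ t, 0 ≤ t → 0 < S t + I t + R t) →
        (∀ t, 0 ≤ t → HasDerivAt I
          (β * S t * I t / (S t + I t + R t) - (γ + d + dI) * I t) t) →
        (∀ t, 0 ≤ t → HasDerivAt R (R' t) t) →
        (∀ t, 0 ≤ t → R' t ≤ γ * I t - d * R t) →
        (∀ t, 0 ≤ t → HasDerivAt (fun s => S s + I s + R s)
          (b (S t + I t + R t) - d * (S t + I t + R t) - dI * I t) t) →
        |S 0 - Nstar| < δ → I 0 < δ → R 0 < δ →
        ∀ t, 0 ≤ t → |S t - Nstar| < ε ∧ I t < ε ∧ R t < ε := by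
  intro ε hε
  have hΛ : 0 < γ + d + dI := by linarith
  have hβΛ : β < γ + d + dI := by rwa [div_lt_one hΛ] at hR0
  -- the strip radius
  obtain ⟨η, hη, hηε, hηN⟩ : ∃ η : ℝ, 0 < η ∧ η ≤ ε / 4 ∧ η ≤ Nstar / 2 :=
    ⟨min (ε / 4) (Nstar / 2), lt_min (by linarith) (by linarith),
      min_le_left _ _, min_le_right _ _⟩
  -- the compact strip and the positive minimum of b N - d N there
  have hKne : Nstar - η ∈ Icc (Nstar - η) (Nstar - η / 2) := ⟨le_rfl, by linarith⟩
  have hKsub : Icc (Nstar - η) (Nstar - η / 2) ⊆ Ici (0:ℝ) := by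
    intro x hx; simp only [mem_Ici]; have := hx.1; linarith
  have hfc : ContinuousOn (fun N => b N - d * N) (Icc (Nstar - η) (Nstar - η / 2)) :=
    ((hbC.continuousOn.mono hKsub).sub (continuousOn_const.mul continuousOn_id))
  obtain ⟨m, hm, hmmin⟩ : ∃ m : ℝ, 0 < m ∧
      ∀ N ∈ Icc (Nstar - η) (Nstar - η / 2), m ≤ b N - d * N := by
    obtain ⟨N₀, hN₀K, hN₀min⟩ := isCompact_Icc.exists_isMinOn ⟨Nstar - η, hKne⟩ hfc
    refine ⟨b N₀ - d * N₀, ?_, fun N hN => hN₀min hN⟩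
    have h1 : 0 < N₀ := by have := hN₀K.1; linarith
    have h2 : N₀ < Nstar := by have := hN₀K.2; linarith
    have := hlow N₀ h1 h2
    linarith
  -- choose δ
  obtain ⟨δ, hδpos, hδ1, hδ2, hδ3, hδ4⟩ : ∃ δ : ℝ, 0 < δ ∧ δ ≤ η / 6 ∧
      δ ≤ m / (dI + 1) ∧ δ ≤ ε / 4 ∧ δ ≤ ε * d / (4 * γ) :=
    ⟨min (min (η / 6) (m / (dI + 1))) (min (ε / 4) (ε * d / (4 * γ))),
      lt_min (lt_min (by linarith) (by positivity)) (lt_min (by linarith) (by positivity)),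
      le_trans (min_le_left _ _) (min_le_left _ _),
      le_trans (min_le_left _ _) (min_le_right _ _),
      le_trans (min_le_right _ _) (min_le_left _ _),
      le_trans (min_le_right _ _) (min_le_right _ _)⟩
  have hδm : dI * δ ≤ m := by
    have h1 : δ * (dI + 1) ≤ m := by
      rw [← le_div_iff₀ (by linarith : (0:ℝ) < dI + 1)]; exact hδ2
    nlinarith
  refine ⟨δ, hδpos, ?_⟩
  intro S I R R' hSdiff hS hIpos hRpos hNpos hIeq hRderiv hRle hNeq hS0 hI0 hR0'
  -- Step 1: I is antitone, hence I t ≤ I 0 < δ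
  have hIanti : AntitoneOn I (Ici 0) := by
    apply antitoneOn_of_deriv_nonpos (convex_Ici 0)
      (fun t ht => (hIeq t ht).continuousAt.continuousWithinAt)
    · intro t ht
      rw [interior_Ici] at ht
      exact ((hIeq t ht.le).differentiableAt).differentiableWithinAt
    · intro t ht
      rw [interior_Ici] at ht
      have ht' : (0:ℝ) ≤ t := ht.le
      rw [(hIeq t ht').deriv]
      have hN := hNpos t ht'
      have hI' := hIpos t ht'
      have hR' := hRpos t ht'
      have h1 : β * S t * I t / (S t + I t + R t) ≤ β * I t := by
        rw [div_le_iff₀ hN]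
        nlinarith [mul_nonneg (mul_nonneg hβ hI') (add_nonneg hI' hR')]
      nlinarith
  have hIle : ∀ t, 0 ≤ t → I t ≤ I 0 :=
    fun t ht => hIanti (mem_Ici.2 le_rfl) ht ht
  have hIδ : ∀ t, 0 ≤ t → I t < δ := fun t ht => lt_of_le_of_lt (hIle t ht) hI0
  -- Step 2: R t ≤ max (R 0) (γ δ / d)
  obtain ⟨c, hc_def⟩ : ∃ c : ℝ, c = γ * δ / d := ⟨_, rfl⟩
  have hcpos : 0 < c := by rw [hc_def]; positivity
  have hdc : d * c = γ * δ := by rw [hc_def]; field_simp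
  have hherd : ∀ t ∈ Ici (0:ℝ), HasDerivAt (fun s => Real.exp (d * s) * (R s - c))
      (Real.exp (d * t) * d * (R t - c) + Real.exp (d * t) * R' t) t := by
    intro t ht
    have e1 : HasDerivAt (fun s : ℝ => Real.exp (d * s)) (Real.exp (d * t) * d) t := by
      simpa using ((hasDerivAt_id t).const_mul d).exp
    exact e1.mul ((hRderiv t ht).sub_const c)
  have hhanti : AntitoneOn (fun s => Real.exp (d * s) * (R s - c)) (Ici 0) := by
    apply antitoneOn_of_deriv_nonpos (convex_Ici 0)
      (fun t ht => (hherd t ht).continuousAt.continuousWithinAt)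
    · intro t ht
      rw [interior_Ici] at ht
      exact ((hherd t (mem_Ici.2 (mem_Ioi.1 ht).le)).differentiableAt).differentiableWithinAt
    · intro t ht
      rw [interior_Ici] at ht
      have ht' : (0:ℝ) ≤ t := ht.le
      rw [(hherd t ht').deriv]
      have h1 : R' t ≤ γ * I t - d * R t := hRle t ht'
      have h3 : γ * I t ≤ γ * δ := mul_le_mul_of_nonneg_left (hIδ t ht').le hγ.le
      have h4 : (0:ℝ) < Real.exp (d * t) := Real.exp_pos _
      have h5 : Real.exp (d * t) * d * (R t - c) + Real.exp (d * t) * R' t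
          = Real.exp (d * t) * (d * (R t - c) + R' t) := by ring
      rw [h5]
      apply mul_nonpos_of_nonneg_of_nonpos h4.le
      nlinarith
  have hRbound : ∀ t, 0 ≤ t → R t ≤ max (R 0) c := by
    intro t ht
    have key := hhanti (mem_Ici.2 le_rfl) ht ht
    simp only [mul_zero, Real.exp_zero, one_mul] at key
    rcases le_or_gt (R t) c with h | h
    · exact le_trans h (le_max_right _ _)
    · have hexp : (1:ℝ) ≤ Real.exp (d * t) := by
        rw [← Real.exp_zero]; apply Real.exp_le_exp.2; positivity
      have h6 : R t - c ≤ Real.exp (d * t) * (R t - c) :=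
        le_mul_of_one_le_left (by linarith) hexp
      have : R t ≤ R 0 := by linarith
      exact le_trans this (le_max_left _ _)
  have hcε : c ≤ ε / 4 := by
    rw [hc_def, div_le_iff₀ hd]
    calc γ * δ ≤ γ * (ε * d / (4 * γ)) := mul_le_mul_of_nonneg_left hδ4 hγ.le
      _ = ε / 4 * d := by field_simp
  have hRε4 : ∀ t, 0 ≤ t → R t ≤ ε / 4 := by
    intro t ht
    refine le_trans (hRbound t ht) (max_le (by linarith) hcε)
  -- Step 3: bounds on N = S + I + R
  have habs := abs_lt.1 hS0
  have hI00 := hIpos 0 le_rfl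
  have hR00 := hRpos 0 le_rfl
  have hN0u : S 0 + I 0 + R 0 < Nstar + 3 * δ := by linarith [habs.2]
  have hN0l : Nstar - δ < S 0 + I 0 + R 0 := by linarith [habs.1]
  have hup : ∀ t, 0 ≤ t → S t + I t + R t ≤ Nstar + η / 2 := by
    intro t ht
    apply stays_below (fun s => S s + I s + R s)
      (fun s => b (S s + I s + R s) - d * (S s + I s + R s) - dI * I s) t ht
    · exact fun s hs => hNeq s hs.1
    · linarith
    · intro s hs hgt
      have h1 : Nstar < S s + I s + R s := by linarith
      have h2 := hhigh _ h1
      have h3 : 0 ≤ dI * I s := mul_nonneg hdI (hIpos s hs.1)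
      linarith
  have hlo' : ∀ t, 0 ≤ t → Nstar - η ≤ S t + I t + R t := by
    intro t ht
    apply stays_above (fun s => S s + I s + R s)
      (fun s => b (S s + I s + R s) - d * (S s + I s + R s) - dI * I s) t ht
      (Nstar - η) (Nstar - η / 2) (by linarith)
    · exact fun s hs => hNeq s hs.1
    · linarith
    · intro s hs hgt hlt
      have hmin := hmmin (S s + I s + R s) ⟨hgt.le, hlt.le⟩
      have h3 : dI * I s ≤ dI * δ :=
        mul_le_mul_of_nonneg_left (hIδ s hs.1).le hdI
      linarith
  -- Conclusion
  intro t ht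
  have hIt : I t < δ := hIδ t ht
  have hRt : R t ≤ ε / 4 := hRε4 t ht
  have hRt' : R t < ε := by
    refine lt_of_le_of_lt (hRbound t ht) (max_lt ?_ ?_) <;> linarith
  have hupt := hup t ht
  have hlot := hlo' t ht
  have hIt0 := hIpos t ht
  have hRt0 := hRpos t ht
  exact ⟨abs_lt.2 ⟨by linarith, by linarith⟩, by linarith, hRt'⟩
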